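/- The function f(w) = √(D_p(w)) is continuous on ℂ ∖ I_p and analytic on ℂ ∖ cl(I_p) (the closure of I_p). Moreover, for every w₀ ∈ I_p one has D_p(w₀) ∈ (−∞, 0), the limit of f(w) as w → w₀ from the right equals sgn(Im(w₀))·i·√(−D_p(w₀)), and the limit of f(w) as w → w₀ from the left equals −sgn(Im(w₀))·i·√(−D_p(w₀)). -/

import Mathlib

open Set Filter Topology



lemma sqrtlim_pos {t : ℝ} (ht : t < 0) :
    Tendsto (fun z : ℂ => z ^ ((1:ℂ)/2)) (𝓝[{z : ℂ | 0 ≤ z.im}] (t:ℂ))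
      (𝓝 (Complex.I * (Real.sqrt (-t) : ℝ))) := by
  have htne : (t:ℂ) ≠ 0 := by exact_mod_cast ht.ne
  have hre : ((t:ℂ)).re < 0 := by simpa using ht
  have him : ((t:ℂ)).im = 0 := by simp
  have hlog := Complex.tendsto_log_nhdsWithin_im_nonneg_of_re_neg_of_im_zero hre him
  have h2 : Tendsto (fun z : ℂ => Complex.exp (Complex.log z * ((1:ℂ)/2)))
      (𝓝[{z : ℂ | 0 ≤ z.im}] (t:ℂ))
      (𝓝 (Complex.exp ((Real.log (‖(t:ℂ)‖) + Real.pi * Complex.I) * ((1:ℂ)/2)))) :=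
    Complex.continuous_exp.continuousAt.tendsto.comp (hlog.mul tendsto_const_nhds)
  have heq : Complex.exp ((↑(Real.log (‖(t:ℂ)‖)) + ↑Real.pi * Complex.I) * ((1:ℂ)/2))
      = Complex.I * (Real.sqrt (-t) : ℝ) := by
    rw [add_mul, Complex.exp_add]
    have e1 : ((Real.log (‖(t:ℂ)‖) : ℂ)) * ((1:ℂ)/2) = ((Real.log (-t) / 2 : ℝ) : ℂ) := by
      rw [Complex.norm_real, Real.norm_eq_abs, abs_of_neg ht]; push_cast; ring
    have e2 : Real.exp (Real.log (-t) / 2) = Real.sqrt (-t) := by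
      rw [Real.sqrt_eq_rpow, Real.rpow_def_of_pos (by linarith)]; ring_nf
    have e3 : Complex.exp (↑Real.pi * Complex.I * ((1:ℂ)/2)) = Complex.I := by
      have : (Real.pi : ℂ) * Complex.I * ((1:ℂ)/2) = ((Real.pi/2 : ℝ) : ℂ) * Complex.I := by
        push_cast; ring
      rw [this, Complex.exp_mul_I, ← Complex.ofReal_cos, ← Complex.ofReal_sin,
        Real.cos_pi_div_two, Real.sin_pi_div_two]
      simp
    rw [e1, ← Complex.ofReal_exp, e2, e3]; ring
  rw [← heq]
  refine Tendsto.congr' ?_ h2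
  filter_upwards [(eventually_ne_nhds htne).filter_mono nhdsWithin_le_nhds] with z hz
  rw [Complex.cpow_def_of_ne_zero hz]

lemma sqrtlim_neg {t : ℝ} (ht : t < 0) :
    Tendsto (fun z : ℂ => z ^ ((1:ℂ)/2)) (𝓝[{z : ℂ | z.im < 0}] (t:ℂ))
      (𝓝 (-(Complex.I * (Real.sqrt (-t) : ℝ)))) := by
  have htne : (t:ℂ) ≠ 0 := by exact_mod_cast ht.ne
  have hre : ((t:ℂ)).re < 0 := by simpa using ht
  have him : ((t:ℂ)).im = 0 := by simp
  have hlog := Complex.tendsto_log_nhdsWithin_im_neg_of_re_neg_of_im_zero hre him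
  have h2 : Tendsto (fun z : ℂ => Complex.exp (Complex.log z * ((1:ℂ)/2)))
      (𝓝[{z : ℂ | z.im < 0}] (t:ℂ))
      (𝓝 (Complex.exp ((Real.log (‖(t:ℂ)‖) - Real.pi * Complex.I) * ((1:ℂ)/2)))) :=
    Complex.continuous_exp.continuousAt.tendsto.comp (hlog.mul tendsto_const_nhds)
  have heq : Complex.exp ((↑(Real.log (‖(t:ℂ)‖)) - ↑Real.pi * Complex.I) * ((1:ℂ)/2))
      = -(Complex.I * (Real.sqrt (-t) : ℝ)) := by
    rw [sub_mul, Complex.exp_sub]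
    have e1 : ((Real.log (‖(t:ℂ)‖) : ℂ)) * ((1:ℂ)/2) = ((Real.log (-t) / 2 : ℝ) : ℂ) := by
      rw [Complex.norm_real, Real.norm_eq_abs, abs_of_neg ht]; push_cast; ring
    have e2 : Real.exp (Real.log (-t) / 2) = Real.sqrt (-t) := by
      rw [Real.sqrt_eq_rpow, Real.rpow_def_of_pos (by linarith)]; ring_nf
    have e3 : Complex.exp (↑Real.pi * Complex.I * ((1:ℂ)/2)) = Complex.I := by
      have : (Real.pi : ℂ) * Complex.I * ((1:ℂ)/2) = ((Real.pi/2 : ℝ) : ℂ) * Complex.I := by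
        push_cast; ring
      rw [this, Complex.exp_mul_I, ← Complex.ofReal_cos, ← Complex.ofReal_sin,
        Real.cos_pi_div_two, Real.sin_pi_div_two]
      simp
    rw [e1, ← Complex.ofReal_exp, e2, e3]
    rw [div_eq_mul_inv, Complex.inv_I]
    ring
  rw [← heq]
  refine Tendsto.congr' ?_ h2
  filter_upwards [(eventually_ne_nhds htne).filter_mono nhdsWithin_le_nhds] with z hz
  rw [Complex.cpow_def_of_ne_zero hz]



set_option maxHeartbeats 1600000 in
theorem stmt2 (a α α' : ℝ) (ha : a ∈ Ioo (0 : ℝ) 1) (hαα : α ≠ α')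
    (𝒜 : ℝ) (h𝒜 : 𝒜 = α' - α)
    (Dp : ℂ → ℂ)
    (hDp : ∀ w : ℂ, Dp w = ((𝒜 : ℂ) * w + ((1 - 2 * a : ℝ) : ℂ)) ^ 2 + ((4 * a * (1 - a) : ℝ) : ℂ))
    (Ip : Set ℂ)
    (hIp : Ip = {w : ℂ | w.re = -(1 - 2 * a) / 𝒜 ∧ 2 * Real.sqrt (a * (1 - a)) / |𝒜| < |w.im|})
    (f : ℂ → ℂ) (hf : ∀ w : ℂ, f w = (Dp w) ^ ((1 : ℂ) / 2)) :
    -- continuity and analyticity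
    ContinuousOn f Ipᶜ
    ∧ AnalyticOnNhd ℂ f (closure Ip)ᶜ
    -- D_p is a negative real on I_p
    ∧ (∀ w₀ ∈ Ip, (Dp w₀).im = 0 ∧ (Dp w₀).re < 0)
    -- one-sided limits
    ∧ (∀ w₀ ∈ Ip,
        Tendsto f (nhdsWithin w₀ ({w : ℂ | w₀.re < w.re} ∩ Ipᶜ))
          (nhds (((Real.sign w₀.im : ℝ) : ℂ) * Complex.I * (Real.sqrt (-(Dp w₀).re) : ℝ)))
        ∧ Tendsto f (nhdsWithin w₀ ({w : ℂ | w.re < w₀.re} ∩ Ipᶜ))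
          (nhds (-(((Real.sign w₀.im : ℝ) : ℂ) * Complex.I * (Real.sqrt (-(Dp w₀).re) : ℝ))))) := by
  obtain ⟨ha0, ha1⟩ := ha
  have h𝒜0 : 𝒜 ≠ 0 := by rw [h𝒜]; exact sub_ne_zero.mpr (Ne.symm hαα)
  set c : ℝ := -(1 - 2 * a) / 𝒜 with hc
  set s : ℝ := Real.sqrt (a * (1 - a)) with hs
  set r : ℝ := 2 * s / |𝒜| with hr
  have hk : (0:ℝ) < a * (1 - a) := mul_pos ha0 (by linarith)
  have hs0 : 0 < s := Real.sqrt_pos.mpr hk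
  have hs2 : s ^ 2 = a * (1 - a) := Real.sq_sqrt hk.le
  have h𝒜abs : 0 < |𝒜| := abs_pos.mpr h𝒜0
  have hrpos : 0 < r := by positivity
  have h𝒜c : 𝒜 * c = -(1 - 2 * a) := by rw [hc]; field_simp
  -- re/im of Dp
  have hre : ∀ w : ℂ, (Dp w).re
      = (𝒜 * w.re + (1 - 2 * a)) ^ 2 - (𝒜 * w.im) ^ 2 + 4 * a * (1 - a) := by
    intro w
    rw [hDp]
    simp [pow_two, Complex.add_re, Complex.mul_re, Complex.mul_im, Complex.ofReal_re,
      Complex.ofReal_im]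
    try ring
  have him : ∀ w : ℂ, (Dp w).im = 2 * (𝒜 * w.re + (1 - 2 * a)) * (𝒜 * w.im) := by
    intro w
    rw [hDp]
    simp [pow_two, Complex.add_im, Complex.mul_re, Complex.mul_im, Complex.ofReal_re,
      Complex.ofReal_im]
    try ring
  have him' : ∀ w : ℂ, (Dp w).im = 2 * 𝒜 ^ 2 * (w.re - c) * w.im := by
    intro w; rw [him w]; linear_combination (2 * 𝒜 * w.im) * h𝒜c
  have hu : ∀ x : ℝ, 𝒜 * x + (1 - 2 * a) = 0 ↔ x = c := by
    intro x
    rw [hc, eq_div_iff h𝒜0]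
    constructor <;> intro h <;> linear_combination h
  have hv : ∀ y : ℝ, 4 * a * (1 - a) < (𝒜 * y) ^ 2 ↔ r < |y| := by
    intro y
    have h1 : (𝒜 * y) ^ 2 = (|𝒜| * |y|) ^ 2 := by rw [← abs_mul, sq_abs]
    have h2 : 4 * a * (1 - a) = (2 * s) ^ 2 := by linear_combination (-4 : ℝ) * hs2
    rw [hr, div_lt_iff₀ h𝒜abs, h1, h2,
      pow_lt_pow_iff_left₀ (by positivity) (by positivity) two_ne_zero, mul_comm |𝒜| |y|]
  have hv' : ∀ y : ℝ, 4 * a * (1 - a) ≤ (𝒜 * y) ^ 2 ↔ r ≤ |y| := by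
    intro y
    have h1 : (𝒜 * y) ^ 2 = (|𝒜| * |y|) ^ 2 := by rw [← abs_mul, sq_abs]
    have h2 : 4 * a * (1 - a) = (2 * s) ^ 2 := by linear_combination (-4 : ℝ) * hs2
    rw [hr, div_le_iff₀ h𝒜abs, h1, h2,
      pow_le_pow_iff_left₀ (by positivity) (by positivity) two_ne_zero, mul_comm |𝒜| |y|]
  -- characterization of Ip
  have hIp' : ∀ w : ℂ, w ∈ Ip ↔ ((Dp w).im = 0 ∧ (Dp w).re < 0) := by
    intro w
    rw [hIp]
    simp only [mem_setOf_eq, ← hc, ← hs, ← hr]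
    rw [hre w, him w]
    constructor
    · rintro ⟨h1, h2⟩
      have hu0 : 𝒜 * w.re + (1 - 2 * a) = 0 := (hu w.re).mpr h1
      have hv0 : 4 * a * (1 - a) < (𝒜 * w.im) ^ 2 := (hv w.im).mpr h2
      constructor
      · rw [hu0]; ring
      · nlinarith
    · rintro ⟨h1, h2⟩
      have hu0 : 𝒜 * w.re + (1 - 2 * a) = 0 := by
        rcases mul_eq_zero.mp (by linarith : (𝒜 * w.re + (1 - 2 * a)) * (𝒜 * w.im) = 0)
          with h | h
        · exact h
        · exfalso; rw [h] at h2; nlinarith [sq_nonneg (𝒜 * w.re + (1 - 2 * a))]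
      refine ⟨(hu w.re).mp hu0, (hv w.im).mp ?_⟩
      nlinarith [sq_nonneg (𝒜 * w.re + (1 - 2 * a))]
  have hre3 : ∀ x y : ℝ, ((x:ℂ) + (y:ℂ) * Complex.I).re = x := by intro x y; simp
  have him3 : ∀ x y : ℝ, ((x:ℂ) + (y:ℂ) * Complex.I).im = y := by intro x y; simp
  -- boundary set is inside closure Ip
  have hCsub : {w : ℂ | w.re = c ∧ r ≤ |w.im|} ⊆ closure Ip := by
    rintro w ⟨hw1, hw2⟩
    rcases lt_or_eq_of_le hw2 with h | h
    · exact subset_closure (by rw [hIp]; exact ⟨hw1, h⟩)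
    · -- |w.im| = r, approximate
      have hwim0 : w.im ≠ 0 := by
        intro h0; rw [h0] at h; simp at h; linarith
      have hseq : Tendsto (fun n : ℕ => ((w.re : ℂ) + (((1 + 1/(n+1)) * w.im : ℝ) : ℂ) * Complex.I))
          atTop (𝓝 w) := by
        have t1 : Tendsto (fun n : ℕ => (1 + 1/((n:ℝ)+1)) * w.im) atTop (𝓝 w.im) := by
          have := tendsto_one_div_add_atTop_nhds_zero_nat (𝕜 := ℝ)
          have t2 : Tendsto (fun n : ℕ => 1 + 1/((n:ℝ)+1)) atTop (𝓝 (1 + 0)) :=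
            tendsto_const_nhds.add this
          rw [add_zero] at t2
          simpa using t2.mul_const w.im
        have t3 : Continuous (fun t : ℝ => (w.re : ℂ) + (t : ℂ) * Complex.I) :=
          continuous_const.add (Complex.continuous_ofReal.mul continuous_const)
        have := (t3.continuousAt (x := w.im)).tendsto.comp t1
        simp only [Function.comp_def] at this
        have e : (𝓝 ((w.re : ℂ) + (w.im : ℂ) * Complex.I)) = 𝓝 w := by
          rw [Complex.re_add_im]
        rw [e] at this
        exact this
      refine mem_closure_of_tendsto hseq (Eventually.of_forall fun n => ?_)
      rw [hIp]
      constructor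
      · rw [hre3]; exact hw1
      · rw [him3, abs_mul]
        have hn : (0:ℝ) < 1/((n:ℝ)+1) := by positivity
        have : |1 + 1/((n:ℝ)+1)| = 1 + 1/((n:ℝ)+1) := abs_of_pos (by linarith)
        rw [this, ← h]
        have : 0 < |w.im| := abs_pos.mpr hwim0
        nlinarith
  -- slitPlane membership off closure
  have hslit : ∀ w : ℂ, w ∉ closure Ip → Dp w ∈ Complex.slitPlane := by
    intro w hw
    rw [Complex.mem_slitPlane_iff]
    by_contra hcon
    push_neg at hcon
    obtain ⟨hre0, him0⟩ := hcon
    apply hw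
    apply hCsub
    rw [hre w] at hre0
    rw [him w] at him0
    have hu0 : 𝒜 * w.re + (1 - 2 * a) = 0 := by
      rcases mul_eq_zero.mp (by linarith : (𝒜 * w.re + (1 - 2 * a)) * (𝒜 * w.im) = 0)
        with h | h
      · exact h
      · exfalso; rw [h] at hre0; nlinarith [sq_nonneg (𝒜 * w.re + (1 - 2 * a))]
    refine ⟨(hu w.re).mp hu0, (hv' w.im).mp ?_⟩
    nlinarith [sq_nonneg (𝒜 * w.re + (1 - 2 * a))]
  -- continuity of Dp
  have hDpc : Continuous Dp := by
    have : Dp = fun w : ℂ => ((𝒜 : ℂ) * w + ((1 - 2 * a : ℝ) : ℂ)) ^ 2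
        + ((4 * a * (1 - a) : ℝ) : ℂ) := funext hDp
    rw [this]
    exact (((continuous_const.mul continuous_id).add continuous_const).pow 2).add
      continuous_const
  have hfe : f = fun w : ℂ => (Dp w) ^ ((1 : ℂ) / 2) := funext hf
  -- Part 1
  have part1 : ContinuousOn f Ipᶜ := by
    intro w hw
    have h1 : 0 ≤ (Dp w).re ∨ (Dp w).im ≠ 0 := by
      by_contra hcon
      push_neg at hcon
      exact hw ((hIp' w).mpr ⟨hcon.2, hcon.1⟩)
    have h2 : (0:ℝ) < ((1 : ℂ)/2).re := by norm_num
    have h3 : ContinuousAt (fun z : ℂ => z ^ ((1 : ℂ)/2)) (Dp w) :=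
      Complex.continuousAt_cpow_const_of_re_pos h1 h2
    rw [hfe]
    exact (h3.comp (hDpc.continuousAt)).continuousWithinAt
  -- Part 2
  have part2 : AnalyticOnNhd ℂ f (closure Ip)ᶜ := by
    intro w hw
    have hA : AnalyticAt ℂ Dp w := by
      have : AnalyticAt ℂ (fun w : ℂ => ((𝒜 : ℂ) * w + ((1 - 2 * a : ℝ) : ℂ)) ^ 2
          + ((4 * a * (1 - a) : ℝ) : ℂ)) w :=
        (((analyticAt_const.mul analyticAt_id).add analyticAt_const).pow 2).add analyticAt_const
      exact this.congr (Eventually.of_forall fun z => (hDp z).symm)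
    rw [hfe]
    exact hA.cpow analyticAt_const (hslit w hw)
  -- Part 3
  have part3 : ∀ w₀ ∈ Ip, (Dp w₀).im = 0 ∧ (Dp w₀).re < 0 := fun w₀ hw₀ => (hIp' w₀).mp hw₀
  refine ⟨part1, part2, part3, ?_⟩
  -- Part 4
  intro w₀ hw₀
  obtain ⟨him0, hre0⟩ := part3 w₀ hw₀
  have hw₀' : w₀.re = c ∧ r < |w₀.im| := by rw [hIp] at hw₀; exact hw₀
  have hwim0 : w₀.im ≠ 0 := by
    intro h0; rw [h0] at hw₀'; simp at hw₀'; linarith [hw₀'.2]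
  set t : ℝ := (Dp w₀).re with htdef
  have hDpt : Dp w₀ = ((t : ℝ) : ℂ) := by
    apply Complex.ext <;> simp [him0, htdef]
  -- generic: tendsto Dp into nhds (t:ℂ)
  have hDtend : ∀ S : Set ℂ, Tendsto Dp (𝓝[S] w₀) (𝓝 ((t:ℂ))) := by
    intro S
    rw [← hDpt]
    exact hDpc.continuousAt.tendsto.mono_left nhdsWithin_le_nhds
  have hiseq : ∀ w : ℂ, (Dp w).im = 2 * 𝒜 ^ 2 * (w.re - c) * w.im := him'
  have h𝒜sq : (0:ℝ) < 𝒜 ^ 2 := by positivity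
  rcases hwim0.lt_or_gt with hneg | hpos
  · -- w₀.im < 0
    have hsign : Real.sign w₀.im = -1 := Real.sign_of_neg hneg
    have hev : ∀ᶠ w in 𝓝 w₀, w.im < 0 :=
      (isOpen_lt Complex.continuous_im continuous_const).mem_nhds hneg
    constructor
    · -- right limit: w.re > c, w.im < 0 ⇒ Im Dp < 0
      have hmem : Tendsto Dp (𝓝[{w : ℂ | w₀.re < w.re} ∩ Ipᶜ] w₀)
          (𝓝[{z : ℂ | z.im < 0}] ((t:ℂ))) := by
        rw [tendsto_nhdsWithin_iff]
        refine ⟨hDtend _, ?_⟩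
        filter_upwards [hev.filter_mono nhdsWithin_le_nhds, self_mem_nhdsWithin]
          with w h1 h2
        have hw : w₀.re < w.re := h2.1
        have : (Dp w).im < 0 := by
          rw [hiseq w]
          have : 0 < w.re - c := by rw [← hw₀'.1]; linarith
          nlinarith [mul_pos (mul_pos h𝒜sq this) (neg_pos.mpr h1)]
        exact this
      have := (sqrtlim_neg hre0).comp hmem
      rw [hfe, hsign]
      rw [Function.comp_def] at this
      convert this using 2
      push_cast; ring
    · -- left limit: w.re < c, w.im < 0 ⇒ Im Dp > 0
      have hmem : Tendsto Dp (𝓝[{w : ℂ | w.re < w₀.re} ∩ Ipᶜ] w₀)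
          (𝓝[{z : ℂ | 0 ≤ z.im}] ((t:ℂ))) := by
        rw [tendsto_nhdsWithin_iff]
        refine ⟨hDtend _, ?_⟩
        filter_upwards [hev.filter_mono nhdsWithin_le_nhds, self_mem_nhdsWithin]
          with w h1 h2
        have hw : w.re < w₀.re := h2.1
        have : (0:ℝ) ≤ (Dp w).im := by
          rw [hiseq w]
          have : w.re - c < 0 := by rw [← hw₀'.1]; linarith
          nlinarith [mul_pos (mul_pos h𝒜sq (neg_pos.mpr this)) (neg_pos.mpr h1)]
        exact this
      have := (sqrtlim_pos hre0).comp hmem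
      rw [hfe, hsign]
      rw [Function.comp_def] at this
      convert this using 2
      push_cast; ring
  · -- w₀.im > 0
    have hsign : Real.sign w₀.im = 1 := Real.sign_of_pos hpos
    have hev : ∀ᶠ w in 𝓝 w₀, 0 < w.im :=
      (isOpen_lt continuous_const Complex.continuous_im).mem_nhds hpos
    constructor
    · have hmem : Tendsto Dp (𝓝[{w : ℂ | w₀.re < w.re} ∩ Ipᶜ] w₀)
          (𝓝[{z : ℂ | 0 ≤ z.im}] ((t:ℂ))) := by
        rw [tendsto_nhdsWithin_iff]
        refine ⟨hDtend _, ?_⟩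
        filter_upwards [hev.filter_mono nhdsWithin_le_nhds, self_mem_nhdsWithin]
          with w h1 h2
        have hw : w₀.re < w.re := h2.1
        have : (0:ℝ) ≤ (Dp w).im := by
          rw [hiseq w]
          have : 0 < w.re - c := by rw [← hw₀'.1]; linarith
          nlinarith [mul_pos (mul_pos h𝒜sq this) h1]
        exact this
      have := (sqrtlim_pos hre0).comp hmem
      rw [hfe, hsign]
      rw [Function.comp_def] at this
      convert this using 2
      push_cast; ring
    · have hmem : Tendsto Dp (𝓝[{w : ℂ | w.re < w₀.re} ∩ Ipᶜ] w₀)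
          (𝓝[{z : ℂ | z.im < 0}] ((t:ℂ))) := by
        rw [tendsto_nhdsWithin_iff]
        refine ⟨hDtend _, ?_⟩
        filter_upwards [hev.filter_mono nhdsWithin_le_nhds, self_mem_nhdsWithin]
          with w h1 h2
        have hw : w.re < w₀.re := h2.1
        have : (Dp w).im < 0 := by
          rw [hiseq w]
          have : w.re - c < 0 := by rw [← hw₀'.1]; linarith
          nlinarith [mul_pos (mul_pos h𝒜sq (neg_pos.mpr this)) h1]
        exact this
      have := (sqrtlim_neg hre0).comp hmem
      rw [hfe, hsign]
      rw [Function.comp_def] at this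
      convert this using 2
      push_cast; ring
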